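/- Let i, j, k ≥ 0 be integers. Then there is a constant C(i,j,k) such that for all r, t > 0 and 0 < λ ≤ t + r, |∂_λ^i ∂_r^j ∂_t^k z(λ,r,t)| ≤ C(i,j,k) λ^{−1−i} r^{−1−j} (t+r)^{2−k}, where z(λ,r,t) = (λ²+r²−t²)/(2rλ). -/

import Mathlib

set_option maxHeartbeats 1000000

open Finset in
lemma st18_congr {U : Set ℝ} (hU : IsOpen U) {f g : ℝ → ℝ} (h : Set.EqOn f g U) (n : ℕ) :
    Set.EqOn (iteratedDeriv n f) (iteratedDeriv n g) U := by
  induction n with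
  | zero => simpa using h
  | succ n ih =>
    intro x hx
    rw [iteratedDeriv_succ, iteratedDeriv_succ]
    exact (Filter.eventuallyEq_of_mem (hU.mem_nhds hx) ih).deriv_eq

open Finset in
lemma st18_two (a b : ℝ) (m p : ℤ) (n : ℕ) :
    Set.EqOn (iteratedDeriv n (fun x : ℝ => a * x ^ m + b * x ^ p))
      (fun x => (a * ∏ q ∈ Finset.range n, ((m:ℝ) - q)) * x ^ (m - n)
        + (b * ∏ q ∈ Finset.range n, ((p:ℝ) - q)) * x ^ (p - n)) {x : ℝ | x ≠ 0} := by
  induction n with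
  | zero => intro x hx; simp
  | succ n ih =>
    intro x hx
    have hx' : x ≠ 0 := hx
    rw [iteratedDeriv_succ]
    rw [(Filter.eventuallyEq_of_mem (isOpen_ne.mem_nhds hx') ih).deriv_eq]
    have h1 := ((hasDerivAt_zpow (m - n) x (Or.inl hx')).const_mul
      (a * ∏ q ∈ Finset.range n, ((m:ℝ) - q)))
    have h2 := ((hasDerivAt_zpow (p - n) x (Or.inl hx')).const_mul
      (b * ∏ q ∈ Finset.range n, ((p:ℝ) - q)))
    rw [deriv_fun_add h1.differentiableAt h2.differentiableAt, h1.deriv, h2.deriv]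
    rw [Finset.prod_range_succ, Finset.prod_range_succ]
    have e1 : m - (n:ℤ) - 1 = m - ((n:ℕ)+1 : ℕ) := by push_cast; ring
    have e2 : p - (n:ℤ) - 1 = p - ((n:ℕ)+1 : ℕ) := by push_cast; ring
    rw [← e1, ← e2]
    push_cast
    ring

open Finset in
lemma st18_K1 (k : ℕ) (t s : ℝ) (ht : 0 < t) (hts : t ≤ s) (hs : 0 < s) :
    |∏ q ∈ Finset.range k, ((((0:ℤ)):ℝ) - q)| * t ^ (-(k:ℤ)) * s ^ 2 ≤ s ^ (2 - (k:ℝ)) := by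
  cases k with
  | zero =>
    simp only [Finset.range_zero, Finset.prod_empty, abs_one, one_mul, Nat.cast_zero, neg_zero,
      zpow_zero, sub_zero]
    rw [show (2:ℝ) = ((2:ℕ):ℝ) by norm_num, Real.rpow_natCast]
  | succ n =>
    have h0 : (∏ q ∈ Finset.range (n+1), ((((0:ℤ)):ℝ) - q)) = 0 :=
      Finset.prod_eq_zero (Finset.mem_range.2 (Nat.succ_pos n)) (by norm_num)
    rw [h0]
    simp only [abs_zero, zero_mul]
    positivity

open Finset in
lemma st18_K2 (k : ℕ) (t s : ℝ) (ht : 0 < t) (hts : t ≤ s) (hs : 0 < s) :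
    |(∏ q ∈ Finset.range k, ((((2:ℤ)):ℝ) - q)) * t ^ ((2:ℤ) - k)| ≤ 2 * s ^ (2 - (k:ℝ)) := by
  match k with
  | 0 =>
    simp only [Finset.range_zero, Finset.prod_empty, one_mul, Nat.cast_zero, sub_zero]
    rw [show ((2:ℤ)) = ((2:ℕ):ℤ) from rfl, zpow_natCast,
      show (2:ℝ) = ((2:ℕ):ℝ) by norm_num, Real.rpow_natCast]
    rw [abs_of_pos (by positivity)]
    push_cast
    nlinarith
  | 1 =>
    have h1 : (∏ q ∈ Finset.range 1, ((((2:ℤ)):ℝ) - q)) = 2 := by simp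
    rw [h1, show ((2:ℤ) - (1:ℕ)) = ((1:ℕ):ℤ) by norm_num, zpow_natCast,
      show (2:ℝ) - ((1:ℕ):ℝ) = ((1:ℕ):ℝ) by norm_num, Real.rpow_natCast]
    rw [abs_of_pos (by positivity)]
    simp only [pow_one]
    nlinarith
  | 2 =>
    have h1 : (∏ q ∈ Finset.range 2, ((((2:ℤ)):ℝ) - q)) = 2 := by
      norm_num [Finset.prod_range_succ]
    rw [h1, show ((2:ℤ) - (2:ℕ)) = (0:ℤ) by norm_num, zpow_zero,
      show (2:ℝ) - ((2:ℕ):ℝ) = (0:ℝ) by norm_num, Real.rpow_zero]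
    norm_num
  | (n+3) =>
    have h1 : (∏ q ∈ Finset.range (n+3), ((((2:ℤ)):ℝ) - q)) = 0 :=
      Finset.prod_eq_zero (Finset.mem_range.2 (by omega : 2 < n + 3)) (by norm_num)
    rw [h1]
    simp only [zero_mul, abs_zero]
    positivity

open Finset in
theorem stmt_18 (i j k : ℕ) :
    ∃ C : ℝ, 0 < C ∧ ∀ r t lam : ℝ, 0 < r → 0 < t → 0 < lam → lam ≤ t + r →
      |iteratedDeriv i
          (fun l : ℝ => iteratedDeriv j
            (fun r' : ℝ => iteratedDeriv k
              (fun t' : ℝ => (l ^ 2 + r' ^ 2 - t' ^ 2) / (2 * r' * l)) t) r) lam| ≤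
        C * lam ^ (-1 - (i : ℝ)) * r ^ (-1 - (j : ℝ)) * (t + r) ^ (2 - (k : ℝ)) := by
  set P0 : ℝ := ∏ q ∈ Finset.range k, ((((0:ℤ)):ℝ) - q) with hP0
  set P2 : ℝ := ∏ q ∈ Finset.range k, ((((2:ℤ)):ℝ) - q) with hP2
  set Pmj : ℝ := ∏ q ∈ Finset.range j, ((((-1:ℤ)):ℝ) - q) with hPmj
  set Pj1 : ℝ := ∏ q ∈ Finset.range j, ((((1:ℤ)):ℝ) - q) with hPj1
  set Pmi : ℝ := ∏ q ∈ Finset.range i, ((((-1:ℤ)):ℝ) - q) with hPmi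
  set Pi1 : ℝ := ∏ q ∈ Finset.range i, ((((1:ℤ)):ℝ) - q) with hPi1
  set C0 : ℝ := |Pmj| * |Pi1| / 2 + (|Pmj| + |Pj1| / 2) * |Pmi| with hC0
  refine ⟨C0 + 1, by positivity, ?_⟩
  intro r t lam hr ht hlam hle
  set T1 : ℝ := t ^ (-(k:ℤ)) with hT1
  set T2 : ℝ := t ^ ((2:ℤ) - k) with hT2
  set a1 : ℝ := P0 * T1 / 2 with ha1
  set a2 : ℝ := -(P2 * T2) / 2 with ha2
  set Y : ℝ := r ^ ((-1:ℤ) - j) with hY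
  set X : ℝ := lam ^ ((-1:ℤ) - i) with hX
  set S : ℝ := (t + r) ^ (2 - (k:ℝ)) with hS
  have hYpos : 0 < Y := zpow_pos hr _
  have hXpos : 0 < X := zpow_pos hlam _
  have hspos : 0 < t + r := by linarith
  have hSpos : 0 < S := Real.rpow_pos_of_pos hspos _
  -- inner derivative closed form
  have hin : ∀ l r' : ℝ, iteratedDeriv k
      (fun t' : ℝ => (l ^ 2 + r' ^ 2 - t' ^ 2) / (2 * r' * l)) t
      = ((l ^ 2 + r' ^ 2) * (2 * r' * l)⁻¹ * P0) * t ^ ((0:ℤ) - k)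
        + ((-(2 * r' * l)⁻¹) * P2) * t ^ ((2:ℤ) - k) := by
    intro l r'
    have hfe : (fun t' : ℝ => (l ^ 2 + r' ^ 2 - t' ^ 2) / (2 * r' * l))
        = fun t' : ℝ => ((l ^ 2 + r' ^ 2) * (2 * r' * l)⁻¹) * t' ^ (0:ℤ)
          + (-(2 * r' * l)⁻¹) * t' ^ (2:ℤ) := by
      funext t'
      rw [zpow_zero, show (2:ℤ) = ((2:ℕ):ℤ) from rfl, zpow_natCast]
      field_simp
      ring
    rw [hfe]
    exact st18_two _ _ 0 2 k ht.ne'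
  -- middle derivative closed form, for l ≠ 0
  have hFl : ∀ l : ℝ, l ≠ 0 →
      iteratedDeriv j (fun r' : ℝ => iteratedDeriv k
        (fun t' : ℝ => (l ^ 2 + r' ^ 2 - t' ^ 2) / (2 * r' * l)) t) r
      = ((a1 * l + a2 * l⁻¹) * Pmj) * r ^ ((-1:ℤ) - j)
        + ((a1 * l⁻¹) * Pj1) * r ^ ((1:ℤ) - j) := by
    intro l hl
    have h2 : Set.EqOn (fun r' : ℝ => iteratedDeriv k
        (fun t' : ℝ => (l ^ 2 + r' ^ 2 - t' ^ 2) / (2 * r' * l)) t)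
        (fun r' : ℝ => (a1 * l + a2 * l⁻¹) * r' ^ (-1:ℤ) + (a1 * l⁻¹) * r' ^ (1:ℤ))
        {x : ℝ | x ≠ 0} := by
      intro r' hr'
      have hr'' : r' ≠ 0 := hr'
      simp only
      rw [hin l r']
      rw [ha1, ha2, hT1, hT2, show ((0:ℤ) - k) = -(k:ℤ) by ring]
      simp only [zpow_one, zpow_neg_one]
      field_simp
      ring
    have hcongr := st18_congr isOpen_ne h2 j (show r ∈ {x : ℝ | x ≠ 0} from hr.ne')
    rw [hcongr]
    exact st18_two _ _ (-1) 1 j hr.ne'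
  -- outer function closed form
  set α : ℝ := a1 * Pmj * Y with hα
  set β : ℝ := a2 * Pmj * Y + a1 * Pj1 * (r ^ 2 * Y) with hβ
  have hrE : r ^ ((1:ℤ) - j) = r ^ 2 * Y := by
    rw [hY, show ((1:ℤ) - j) = ((2:ℕ):ℤ) + ((-1:ℤ) - j) by push_cast; ring,
      zpow_add₀ hr.ne', zpow_natCast]
  have hF2 : Set.EqOn (fun l : ℝ => iteratedDeriv j (fun r' : ℝ => iteratedDeriv k
      (fun t' : ℝ => (l ^ 2 + r' ^ 2 - t' ^ 2) / (2 * r' * l)) t) r)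
      (fun l : ℝ => α * l ^ (1:ℤ) + β * l ^ (-1:ℤ)) {x : ℝ | x ≠ 0} := by
    intro l hl
    have hl' : l ≠ 0 := hl
    simp only
    rw [hFl l hl', hrE, hα, hβ]
    simp only [zpow_one, zpow_neg_one]
    field_simp
    ring
  have hV : iteratedDeriv i (fun l : ℝ => iteratedDeriv j (fun r' : ℝ => iteratedDeriv k
      (fun t' : ℝ => (l ^ 2 + r' ^ 2 - t' ^ 2) / (2 * r' * l)) t) r) lam
      = (α * Pi1) * lam ^ ((1:ℤ) - i) + (β * Pmi) * lam ^ ((-1:ℤ) - i) := by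
    rw [st18_congr isOpen_ne hF2 i (show lam ∈ {x : ℝ | x ≠ 0} from hlam.ne')]
    exact st18_two _ _ 1 (-1) i hlam.ne'
  have hlamE : lam ^ ((1:ℤ) - i) = lam ^ 2 * X := by
    rw [hX, show ((1:ℤ) - i) = ((2:ℕ):ℤ) + ((-1:ℤ) - i) by push_cast; ring,
      zpow_add₀ hlam.ne', zpow_natCast]
  -- key scalar bounds
  have hT1pos : 0 < T1 := zpow_pos ht _
  have hT2pos : 0 < T2 := zpow_pos ht _
  have hK1 : |P0| * T1 * (t + r) ^ 2 ≤ S := by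
    rw [hP0, hT1, hS]
    exact st18_K1 k t (t + r) ht (by linarith) hspos
  have hK2 : |P2 * T2| ≤ 2 * S := by
    rw [hP2, hT2, hS]
    exact st18_K2 k t (t + r) ht (by linarith) hspos
  have ha1abs : |a1| = |P0| * T1 / 2 := by
    rw [ha1, abs_div, abs_mul, abs_of_pos hT1pos]
    norm_num
  have ha2abs : |a2| = |P2 * T2| / 2 := by
    rw [ha2, abs_div, abs_neg]
    norm_num
  have hlam2 : lam ^ 2 ≤ (t + r) ^ 2 := pow_le_pow_left₀ hlam.le hle 2
  have hr2 : r ^ 2 ≤ (t + r) ^ 2 := pow_le_pow_left₀ hr.le (by linarith) 2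
  have h1 : |a1| * lam ^ 2 ≤ S / 2 := by
    rw [ha1abs]
    have : |P0| * T1 * lam ^ 2 ≤ |P0| * T1 * (t + r) ^ 2 := by
      apply mul_le_mul_of_nonneg_left hlam2 (by positivity)
    linarith [hK1]
  have h3 : |a1| * r ^ 2 ≤ S / 2 := by
    rw [ha1abs]
    have : |P0| * T1 * r ^ 2 ≤ |P0| * T1 * (t + r) ^ 2 := by
      apply mul_le_mul_of_nonneg_left hr2 (by positivity)
    linarith [hK1]
  have h2 : |a2| ≤ S := by rw [ha2abs]; linarith [hK2]
  -- final bound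
  have habsY : |Y| = Y := abs_of_pos hYpos
  have habsX : |X| = X := abs_of_pos hXpos
  have hαabs : |α| = |a1| * |Pmj| * Y := by rw [hα, abs_mul, abs_mul, habsY]
  have hβabs : |β| ≤ (|a2| * |Pmj| + |a1| * |Pj1| * r ^ 2) * Y := by
    rw [hβ]
    refine (abs_add_le _ _).trans (le_of_eq ?_)
    rw [abs_mul, abs_mul, abs_mul, abs_mul, habsY,
      abs_of_pos (mul_pos (pow_pos hr 2) hYpos)]
    ring
  have htarget : (C0 + 1) * lam ^ (-1 - (i:ℝ)) * r ^ (-1 - (j:ℝ)) * (t + r) ^ (2 - (k:ℝ))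
      = (C0 + 1) * X * Y * S := by
    rw [hX, hY, hS]
    rw [show (-1 - (i:ℝ)) = (((-1:ℤ) - i : ℤ) : ℝ) by push_cast; ring, Real.rpow_intCast]
    rw [show (-1 - (j:ℝ)) = (((-1:ℤ) - j : ℤ) : ℝ) by push_cast; ring, Real.rpow_intCast]
  rw [htarget, hV, hlamE]
  have step1 : |(α * Pi1) * (lam ^ 2 * X) + (β * Pmi) * X|
      ≤ |α| * |Pi1| * (lam ^ 2 * X) + |β| * |Pmi| * X := by
    have e1 : |(α * Pi1) * (lam ^ 2 * X)| = |α| * |Pi1| * (lam ^ 2 * X) := by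
      rw [abs_mul, abs_mul, abs_of_pos (mul_pos (pow_pos hlam 2) hXpos)]
    have e2 : |(β * Pmi) * X| = |β| * |Pmi| * X := by
      rw [abs_mul, abs_mul, habsX]
    exact (abs_add_le _ _).trans (le_of_eq (by rw [e1, e2]))
  refine step1.trans ?_
  have t1 : |α| * |Pi1| * (lam ^ 2 * X) ≤ (S / 2) * (|Pmj| * |Pi1| * Y * X) := by
    rw [hαabs]
    have : |a1| * |Pmj| * Y * |Pi1| * (lam ^ 2 * X)
        = (|a1| * lam ^ 2) * (|Pmj| * |Pi1| * Y * X) := by ring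
    rw [this]
    exact mul_le_mul_of_nonneg_right h1 (by positivity)
  have t2 : |β| * |Pmi| * X ≤ (S * |Pmj| + (S / 2) * |Pj1|) * (|Pmi| * Y * X) := by
    have hb : |β| * |Pmi| * X ≤ ((|a2| * |Pmj| + |a1| * |Pj1| * r ^ 2) * Y) * (|Pmi| * X) := by
      have := mul_le_mul_of_nonneg_right hβabs (by positivity : (0:ℝ) ≤ |Pmi| * X)
      calc |β| * |Pmi| * X = |β| * (|Pmi| * X) := by ring
        _ ≤ _ := this
    refine hb.trans ?_
    have hcore : |a2| * |Pmj| + |a1| * |Pj1| * r ^ 2 ≤ S * |Pmj| + (S / 2) * |Pj1| := by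
      have e1 : |a2| * |Pmj| ≤ S * |Pmj| := mul_le_mul_of_nonneg_right h2 (abs_nonneg _)
      have e2 : |a1| * |Pj1| * r ^ 2 ≤ (S / 2) * |Pj1| := by
        have : |a1| * |Pj1| * r ^ 2 = (|a1| * r ^ 2) * |Pj1| := by ring
        rw [this]
        exact mul_le_mul_of_nonneg_right h3 (abs_nonneg _)
      linarith
    calc ((|a2| * |Pmj| + |a1| * |Pj1| * r ^ 2) * Y) * (|Pmi| * X)
        = (|a2| * |Pmj| + |a1| * |Pj1| * r ^ 2) * (Y * |Pmi| * X) := by ring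
      _ ≤ (S * |Pmj| + (S / 2) * |Pj1|) * (Y * |Pmi| * X) :=
          mul_le_mul_of_nonneg_right hcore (by positivity)
      _ = (S * |Pmj| + (S / 2) * |Pj1|) * (|Pmi| * Y * X) := by ring
  calc |α| * |Pi1| * (lam ^ 2 * X) + |β| * |Pmi| * X
      ≤ (S / 2) * (|Pmj| * |Pi1| * Y * X) + (S * |Pmj| + (S / 2) * |Pj1|) * (|Pmi| * Y * X) := by
        linarith
    _ = C0 * X * Y * S := by rw [hC0]; ring
    _ ≤ (C0 + 1) * X * Y * S := by
        have hXYS : (0:ℝ) ≤ X * Y * S := by positivity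
        have := mul_le_mul_of_nonneg_right (by linarith : C0 ≤ C0 + 1) hXYS
        calc C0 * X * Y * S = C0 * (X * Y * S) := by ring
          _ ≤ (C0 + 1) * (X * Y * S) := this
          _ = (C0 + 1) * X * Y * S := by ring
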